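/- In the NFA for the next field of a QNode, every directed cycle contains at least one 'begin new acquisition' edge. -/
import Mathlib


/-- States of the NFA for the next field of a QNode. -/
inductive N : Type
  | O1 | O2 | S1 | P1 | M1
deriving DecidableEq

/-- Edges of the next-field NFA; the Boolean flag marks 'begin acquisition'
edges. -/
inductive E : N → N → Bool → Prop
  | a1 : E .O1 .O2 true
  | a2 : E .S1 .O2 true
  | a3 : E .S1 .S1 true
  | a4 : E .P1 .O2 true
  | a5 : E .P1 .P1 true
  | a6 : E .M1 .M1 true
  | e1 : E .O2 .O1 false
  | e2 : E .O2 .S1 false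
  | e3 : E .S1 .P1 false
  | e4 : E .O2 .M1 false
  | e5 : E .M1 .S1 false

def rk : N → ℕ
  | .O2 => 3
  | .M1 => 2
  | .S1 => 1
  | .P1 => 0
  | .O1 => 0

lemma rk_lt {a b : N} (h : E a b false) : rk b < rk a := by
  cases h <;> simp [rk]

/-- Every directed cycle of the next-field NFA contains at least one
'begin acquisition' edge. -/
theorem next_field_livelock_free :
    ∀ s : N, ¬ Relation.TransGen (fun a b => E a b false) s s := by
  have key : ∀ a b : N, Relation.TransGen (fun a b => E a b false) a b → rk b < rk a := by
    intro a b h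
    induction h with
    | single h => exact rk_lt h
    | tail _ h ih => exact (rk_lt h).trans ih
  exact fun s h => lt_irrefl _ (key s s h)
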